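/- Let q ∈ ℕ, w ∈ W and let (ω, r) be a right-sided w-Gauß–Radau quadrature of order q. Then: (1) the nodes r₀, …, r_q are pairwise distinct (so −1 ≤ r₀ < r₁ < ⋯ < r_q = 1); (2) for all j ∈ {0,…,q}: 0 < ω_j ≤ ∫_{−1}^1 w(x) dx; (3) for all j ∈ {0,…,q}: ω_j = ∫_{−1}^1 I_j(x) w(x) dx, where I_j(x) = ∏_{k ≠ j} (x − r_k)/(r_j − r_k) is the j-th Lagrange basis polynomial of the nodes. -/

import Mathlib

open MeasureTheory Real

/-- The class `W` of weighting functions: `w ∈ L¹(-1,1)` with `w > 0` almost everywhere. -/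
def IsWeight (w : ℝ → ℝ) : Prop :=
  IntegrableOn w (Set.Ioo (-1 : ℝ) 1) ∧
    ∀ᵐ x ∂(volume.restrict (Set.Ioo (-1 : ℝ) 1)), 0 < w x

/-- A (right-sided) `w`-Gauß–Radau quadrature of order `q`: a pair `(ω, r)` with
`-1 ≤ r₀ ≤ r₁ ≤ ⋯ ≤ r_q = 1` such that `∫_{-1}^1 p w = Σ_j ω_j p(r_j)` for every
real polynomial `p` of degree at most `2q`. -/
def IsGaussRadauQuad (q : ℕ) (w : ℝ → ℝ) (ω r : Fin (q + 1) → ℝ) : Prop :=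
  (∀ j, r j ∈ Set.Icc (-1 : ℝ) 1) ∧ Monotone r ∧ r (Fin.last q) = 1 ∧
    ∀ p : Polynomial ℝ, p.natDegree ≤ 2 * q →
      ∫ x in Set.Ioo (-1 : ℝ) 1, p.eval x * w x = ∑ j, ω j * p.eval (r j)

/-- A polynomial times an integrable weight is integrable on `Ioo (-1) 1`. -/
lemma integrableOn_poly_mul (w : ℝ → ℝ) (hw : IntegrableOn w (Set.Ioo (-1 : ℝ) 1))
    (p : Polynomial ℝ) :
    IntegrableOn (fun x => p.eval x * w x) (Set.Ioo (-1 : ℝ) 1) := by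
  obtain ⟨C, hC⟩ := (isCompact_Icc (a := (-1:ℝ)) (b := 1)).exists_bound_of_continuousOn
    (p.continuous_aeval.continuousOn)
  refine Integrable.bdd_mul (c := C) hw (p.continuous_aeval.aestronglyMeasurable) ?_
  refine (ae_restrict_iff' measurableSet_Ioo).2 (Filter.Eventually.of_forall fun x hx => ?_)
  simpa using hC x (Set.Ioo_subset_Icc_self hx)

/-- Positivity of the integral of a nonzero nonnegative polynomial against the weight. -/
lemma integral_poly_mul_pos (w : ℝ → ℝ) (hw : IsWeight w) (p : Polynomial ℝ)
    (hp : p ≠ 0) (hpos : ∀ x, 0 ≤ p.eval x) :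
    0 < ∫ x in Set.Ioo (-1 : ℝ) 1, p.eval x * w x := by
  set μ := volume.restrict (Set.Ioo (-1 : ℝ) 1)
  have hint : Integrable (fun x => p.eval x * w x) μ := integrableOn_poly_mul w hw.1 p
  have hnonneg : 0 ≤ᵐ[μ] fun x => p.eval x * w x := by
    filter_upwards [hw.2] with x hx
    exact mul_nonneg (hpos x) hx.le
  rw [integral_pos_iff_support_of_nonneg_ae hnonneg hint]
  have hroots : μ {x | Polynomial.eval x p = 0} = 0 :=
    le_antisymm (le_trans (Measure.restrict_apply_le _ _)
      (le_of_eq ((Polynomial.finite_setOf_isRoot hp).measure_zero _))) (zero_le)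
  have hane : ∀ᵐ x ∂μ, p.eval x * w x ≠ 0 := by
    filter_upwards [hw.2, measure_eq_zero_iff_ae_notMem.1 hroots] with x hx hx2
    exact mul_ne_zero hx2 (ne_of_gt hx)
  have hcompl : μ (Function.support fun x => p.eval x * w x)ᶜ = 0 := by
    have h2 : (Function.support fun x => p.eval x * w x)ᶜ = {x | p.eval x * w x = 0} := by
      ext x
      simp only [Set.mem_compl_iff, Function.mem_support, not_not, Set.mem_setOf_eq]
    rw [h2]
    have h3 := ae_iff.mp hane
    simpa only [ne_eq, not_not] using h3
  by_contra hle
  push_neg at hle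
  have h0 : μ (Function.support fun x => p.eval x * w x) = 0 := le_antisymm hle (zero_le)
  have : μ Set.univ = 0 :=
    le_antisymm (le_trans (measure_univ_le_add_compl _) (by rw [h0, hcompl, add_zero])) (zero_le)
  rw [Measure.restrict_apply_univ, Real.volume_Ioo] at this
  norm_num at this

theorem stmt_12 (q : ℕ) (w : ℝ → ℝ) (hw : IsWeight w)
    (ω r : Fin (q + 1) → ℝ) (h : IsGaussRadauQuad q w ω r) :
    StrictMono r ∧
    (∀ j, 0 < ω j ∧ ω j ≤ ∫ x in Set.Ioo (-1 : ℝ) 1, w x) ∧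
    (∀ j, ω j = ∫ x in Set.Ioo (-1 : ℝ) 1,
        (∏ k ∈ Finset.univ.erase j, (x - r k) / (r j - r k)) * w x) := by
  obtain ⟨hmem, hmono, hlast, hquad⟩ := h
  -- injectivity of nodes
  have hinj : Function.Injective r := by
    intro i j hij
    by_contra hne
    set p : Polynomial ℝ := ∏ k ∈ Finset.univ.erase i, (Polynomial.X - Polynomial.C (r k)) ^ 2
      with hp
    have hpne : p ≠ 0 := by
      refine Finset.prod_ne_zero_iff.2 fun k _ => pow_ne_zero _ (Polynomial.X_sub_C_ne_zero _)
    have hdeg : p.natDegree ≤ 2 * q := by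
      rw [hp, Polynomial.natDegree_prod _ _
        (fun k _ => pow_ne_zero _ (Polynomial.X_sub_C_ne_zero _))]
      simp [Polynomial.natDegree_pow, Finset.card_erase_of_mem, mul_comm]
    have heval : ∀ x, p.eval x = ∏ k ∈ Finset.univ.erase i, (x - r k) ^ 2 := by
      intro x
      simp [hp, Polynomial.eval_prod]
    have hnonneg : ∀ x, 0 ≤ p.eval x := fun x => by
      rw [heval]; exact Finset.prod_nonneg fun k _ => sq_nonneg _
    have hzero : ∀ m, p.eval (r m) = 0 := by
      intro m
      rw [heval]
      rcases eq_or_ne m i with rfl | hmi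
      · refine Finset.prod_eq_zero (Finset.mem_erase.2 ⟨Ne.symm hne, Finset.mem_univ j⟩) ?_
        rw [hij]; ring
      · exact Finset.prod_eq_zero (Finset.mem_erase.2 ⟨hmi, Finset.mem_univ m⟩) (by ring)
    have := hquad p hdeg
    rw [Finset.sum_congr rfl (fun m _ => by rw [hzero m, mul_zero]), Finset.sum_const,
      smul_zero] at this
    exact absurd this (ne_of_gt (integral_poly_mul_pos w hw p hpne hnonneg))
  have hsm : StrictMono r := hmono.strictMono_of_injective hinj
  -- Lagrange basis polynomials
  set L : Fin (q + 1) → Polynomial ℝ := fun j =>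
    ∏ k ∈ Finset.univ.erase j, (Polynomial.C (r j - r k)⁻¹ * (Polynomial.X - Polynomial.C (r k)))
    with hL
  have hLeval : ∀ j x, (L j).eval x =
      ∏ k ∈ Finset.univ.erase j, (x - r k) / (r j - r k) := by
    intro j x
    simp only [hL, Polynomial.eval_prod, Polynomial.eval_mul, Polynomial.eval_C,
      Polynomial.eval_sub, Polynomial.eval_X]
    exact Finset.prod_congr rfl fun k _ => by rw [div_eq_inv_mul]
  have hLdeg : ∀ j, (L j).natDegree ≤ q := by
    intro j
    refine le_trans (Polynomial.natDegree_prod_le _ _) ?_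
    calc ∑ k ∈ Finset.univ.erase j,
          (Polynomial.C (r j - r k)⁻¹ * (Polynomial.X - Polynomial.C (r k))).natDegree
        ≤ ∑ k ∈ Finset.univ.erase j, 1 := by
          refine Finset.sum_le_sum fun k _ => ?_
          refine le_trans (Polynomial.natDegree_mul_le) ?_
          simp [Polynomial.natDegree_X_sub_C]
      _ = q := by simp [Finset.card_erase_of_mem]
  have hLself : ∀ j, (L j).eval (r j) = 1 := by
    intro j
    rw [hLeval]
    refine Finset.prod_eq_one fun k hk => ?_
    have : r j ≠ r k := fun hh => (Finset.mem_erase.1 hk).1 (hinj hh).symm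
    exact div_self (sub_ne_zero.2 this)
  have hLother : ∀ j m, m ≠ j → (L j).eval (r m) = 0 := by
    intro j m hm
    rw [hLeval]
    exact Finset.prod_eq_zero (Finset.mem_erase.2 ⟨hm, Finset.mem_univ m⟩)
      (by rw [sub_self, zero_div])
  -- (3): weights from Lagrange polynomials
  have hω : ∀ j, ω j = ∫ x in Set.Ioo (-1 : ℝ) 1,
      (∏ k ∈ Finset.univ.erase j, (x - r k) / (r j - r k)) * w x := by
    intro j
    have := hquad (L j) (le_trans (hLdeg j) (by omega))
    rw [Finset.sum_eq_single j (fun m _ hm => by rw [hLother j m hm, mul_zero])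
      (fun hm => absurd (Finset.mem_univ j) hm), hLself, mul_one] at this
    rw [← this]
    exact integral_congr_ae (Filter.Eventually.of_forall fun x => by
      dsimp only; rw [hLeval])
  -- positivity of weights
  have hωpos : ∀ j, 0 < ω j := by
    intro j
    have hdeg : ((L j) ^ 2).natDegree ≤ 2 * q := by
      refine le_trans Polynomial.natDegree_pow_le ?_
      have := hLdeg j; omega
    have := hquad ((L j) ^ 2) hdeg
    rw [Finset.sum_eq_single j
      (fun m _ hm => by rw [Polynomial.eval_pow, hLother j m hm]; ring)
      (fun hm => absurd (Finset.mem_univ j) hm),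
      Polynomial.eval_pow, hLself, one_pow, mul_one] at this
    rw [← this]
    refine integral_poly_mul_pos w hw _ (pow_ne_zero _ ?_) (fun x => by
      rw [Polynomial.eval_pow]; exact sq_nonneg _)
    intro hzero
    have := hLself j
    rw [hzero] at this
    simp at this
  refine ⟨hsm, fun j => ⟨hωpos j, ?_⟩, hω⟩
  have h1 := hquad 1 (by simp)
  simp only [Polynomial.eval_one, mul_one, one_mul] at h1
  rw [h1]
  exact Finset.single_le_sum (fun m _ => (hωpos m).le) (Finset.mem_univ j)
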